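/- Let H be a Hilbert space with dim H ≥ 3 and let p, q be nonmaximal nontrivial orthogonal projections on H (nonmaximal meaning there is a projection strictly between the projection and the identity). Then there is a finite chain of nonmaximal nontrivial projections p = p₁, …, p_n = q such that consecutive projections are orthogonal and p_i + p_{i+1} < 1 for all i. -/

import Mathlib

set_option linter.unusedSectionVars false

noncomputable section

variable {H : Type*} [NormedAddCommGroup H] [InnerProductSpace ℂ H] [CompleteSpace H]

/-- A (selfadjoint) projection on `H`. -/
def IsProjOp (P : H →L[ℂ] H) : Prop := IsIdempotentElem P ∧ IsSelfAdjoint P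

/-- The strict order `P < Q` on operators: `Q - P` is a nonzero positive operator. -/
def ltOp (P Q : H →L[ℂ] H) : Prop := (Q - P).IsPositive ∧ P ≠ Q

/-- A nontrivial projection: neither `0` nor `1`. -/
def NontrivProj (P : H →L[ℂ] H) : Prop := P ≠ 0 ∧ P ≠ 1

/-- A nonmaximal projection: some projection lies strictly between it and the identity. -/
def NonmaxProj (P : H →L[ℂ] H) : Prop :=
  ∃ Q : H →L[ℂ] H, IsProjOp Q ∧ ltOp P Q ∧ ltOp Q 1

local notation "⟪" x ", " y "⟫" => @inner ℂ _ _ x y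

/-- Rank-one projection onto the span of `e` (for `e` a unit vector). -/
def projSpan (e : H) : H →L[ℂ] H :=
  (ContinuousLinearMap.toSpanSingleton ℂ e).comp (innerSL ℂ e)

lemma projSpan_apply (e x : H) : projSpan e x = ⟪e, x⟫ • e := rfl

lemma projSpan_symm (e : H) : (projSpan e : H →ₗ[ℂ] H).IsSymmetric := by
  intro x y
  simp only [ContinuousLinearMap.coe_coe, projSpan_apply, inner_smul_left, inner_smul_right,
    inner_conj_symm]
  ring

lemma projSpan_sa (e : H) : IsSelfAdjoint (projSpan e) :=
  (ContinuousLinearMap.isSelfAdjoint_iff_isSymmetric).2 (projSpan_symm e)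

lemma projSpan_idem {e : H} (he : ‖e‖ = 1) : IsIdempotentElem (projSpan e) := by
  ext x
  simp only [ContinuousLinearMap.mul_apply, projSpan_apply, inner_smul_right,
    inner_self_eq_norm_sq_to_K, he]
  norm_num

lemma projSpan_isProj {e : H} (he : ‖e‖ = 1) : IsProjOp (projSpan e) :=
  ⟨projSpan_idem he, projSpan_sa e⟩

lemma projSpan_self {e : H} (he : ‖e‖ = 1) : projSpan e e = e := by
  simp [projSpan_apply, inner_self_eq_norm_sq_to_K, he]

lemma proj_isPositive {P : H →L[ℂ] H} (h : IsProjOp P) : P.IsPositive := by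
  refine ⟨(ContinuousLinearMap.isSelfAdjoint_iff_isSymmetric).1 h.2, fun x => ?_⟩
  have hs := (ContinuousLinearMap.isSelfAdjoint_iff_isSymmetric).1 h.2
  rw [ContinuousLinearMap.reApplyInnerSelf_apply]
  have : P x = P (P x) := by
    conv_lhs => rw [← h.1]
    rfl
  have h2 : ⟪P x, x⟫ = ⟪P x, P x⟫ := by
    conv_lhs => rw [this]
    exact hs (P x) x
  rw [h2]
  exact inner_self_nonneg

lemma isProj_one_sub {P : H →L[ℂ] H} (h : IsProjOp P) : IsProjOp (1 - P) := by
  constructor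
  · have := h.1
    unfold IsIdempotentElem at this ⊢
    rw [mul_sub, sub_mul, sub_mul, one_mul, mul_one, this]
    abel
  · exact (IsSelfAdjoint.one (R := H →L[ℂ] H)).sub h.2

lemma isProj_add {P Q : H →L[ℂ] H} (hP : IsProjOp P) (hQ : IsProjOp Q)
    (h1 : P * Q = 0) (h2 : Q * P = 0) : IsProjOp (P + Q) := by
  constructor
  · unfold IsIdempotentElem
    rw [add_mul, mul_add, mul_add, hP.1, hQ.1, h1, h2]
    abel
  · exact hP.2.add hQ.2

/-- Edge lemma: two orthogonal projections with a common nonzero kernel vector give a valid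
edge of the chain. -/
lemma edge_lemma {P R : H →L[ℂ] H} (hP : IsProjOp P) (hR : IsProjOp R)
    (h1 : P * R = 0) (h2 : R * P = 0) {z : H} (hz : z ≠ 0) (hPz : P z = 0) (hRz : R z = 0) :
    P * R = 0 ∧ ltOp (P + R) 1 := by
  refine ⟨h1, ⟨?_, ?_⟩⟩
  · exact proj_isPositive (isProj_one_sub (isProj_add hP hR h1 h2))
  · intro hcontra
    apply hz
    have : (P + R) z = z := by rw [hcontra]; rfl
    rw [ContinuousLinearMap.add_apply, hPz, hRz, add_zero] at this
    exact this.symm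

/-- From `3 ≤ rank`, any two vectors have a common nonzero orthogonal vector. -/
lemma exists_orth (hdim : 3 ≤ Module.rank ℂ H) (a b : H) :
    ∃ f : H, f ≠ 0 ∧ ⟪a, f⟫ = 0 ∧ ⟪b, f⟫ = 0 := by
  set K : Submodule ℂ H := Submodule.span ℂ {a, b} with hK
  have hfd : FiniteDimensional ℂ K :=
    FiniteDimensional.span_of_finite ℂ ((Set.finite_singleton b).insert a)
  have hrankK : Module.rank ℂ K ≤ 2 := by
    refine (rank_span_le _).trans ?_
    refine (Cardinal.mk_insert_le).trans ?_
    rw [Cardinal.mk_singleton]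
    norm_num
  have hKne : Kᗮ ≠ ⊥ := by
    intro hbot
    have hKtop : K = ⊤ := (Submodule.orthogonal_eq_bot_iff).1 hbot
    have : Module.rank ℂ H ≤ 2 := by
      rw [← rank_top ℂ H, ← hKtop]
      exact hrankK
    have : (3 : Cardinal) ≤ 2 := hdim.trans this
    norm_num at this
  obtain ⟨f, hfK, hf0⟩ := Submodule.exists_mem_ne_zero_of_ne_bot hKne
  rw [Submodule.mem_orthogonal] at hfK
  exact ⟨f, hf0, hfK a (Submodule.subset_span (by simp)), hfK b (Submodule.subset_span (by simp))⟩

/-- normalized version -/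
lemma exists_orth_unit (hdim : 3 ≤ Module.rank ℂ H) (a b : H) :
    ∃ f : H, ‖f‖ = 1 ∧ ⟪a, f⟫ = 0 ∧ ⟪b, f⟫ = 0 := by
  obtain ⟨f, hf0, ha, hb⟩ := exists_orth hdim a b
  refine ⟨(‖f‖ : ℂ)⁻¹ • f, ?_, ?_, ?_⟩
  · rw [norm_smul]
    simp [norm_ne_zero_iff.2 hf0]
  · rw [inner_smul_right, ha, mul_zero]
  · rw [inner_smul_right, hb, mul_zero]

/-- Every rank-one projection on a space of rank ≥ 3 is nontrivial and nonmaximal. -/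
lemma projSpan_nontriv_nonmax (hdim : 3 ≤ Module.rank ℂ H) {a : H} (ha : ‖a‖ = 1) :
    NontrivProj (projSpan a) ∧ NonmaxProj (projSpan a) := by
  obtain ⟨b, hb, hab, -⟩ := exists_orth_unit hdim a a
  obtain ⟨c, hc0, hac, hbc⟩ := exists_orth hdim a b
  have ha0 : a ≠ 0 := by intro h; rw [h, norm_zero] at ha; norm_num at ha
  have hpa : projSpan a a = a := projSpan_self ha
  have hpab : projSpan a b = 0 := by rw [projSpan_apply, hab, zero_smul]
  have hpac : projSpan a c = 0 := by rw [projSpan_apply, hac, zero_smul]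
  have hpbc : projSpan b c = 0 := by rw [projSpan_apply, hbc, zero_smul]
  have hpbb : projSpan b b = b := projSpan_self hb
  have hb0 : b ≠ 0 := by intro h; rw [h, norm_zero] at hb; norm_num at hb
  have hba : ⟪b, a⟫ = 0 := by rw [← inner_conj_symm b a, hab, map_zero]
  have hpba : projSpan b a = 0 := by rw [projSpan_apply, hba, zero_smul]
  constructor
  · constructor
    · intro h
      apply ha0
      rw [← hpa, h]; rfl
    · intro h
      apply hb0
      rw [← hpab, h]; rfl
  · -- NonmaxProj: Q := projSpan a + projSpan b
    refine ⟨projSpan a + projSpan b, ?_, ⟨?_, ?_⟩, ⟨?_, ?_⟩⟩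
    · refine isProj_add (projSpan_isProj ha) (projSpan_isProj hb) ?_ ?_
      · ext x
        simp [ContinuousLinearMap.mul_apply, projSpan_apply, inner_smul_right, hab]
      · ext x
        simp only [ContinuousLinearMap.mul_apply, projSpan_apply, inner_smul_right,
          ContinuousLinearMap.zero_apply]
        rw [hba]
        simp
    · rw [add_sub_cancel_left]
      exact proj_isPositive (projSpan_isProj hb)
    · intro h
      apply hb0
      have := congrArg (fun T => T b) h
      simp only [ContinuousLinearMap.add_apply, hpab, hpbb, zero_add] at this
      exact this.symm
    · refine proj_isPositive (isProj_one_sub ?_)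
      refine isProj_add (projSpan_isProj ha) (projSpan_isProj hb) ?_ ?_
      · ext x
        simp [ContinuousLinearMap.mul_apply, projSpan_apply, inner_smul_right, hab]
      · ext x
        simp only [ContinuousLinearMap.mul_apply, projSpan_apply, inner_smul_right,
          ContinuousLinearMap.zero_apply]
        rw [hba]
        simp
    · intro h
      apply hc0
      have := congrArg (fun T => T c) h
      simp only [ContinuousLinearMap.add_apply, hpac, hpbc, add_zero,
        ContinuousLinearMap.one_apply] at this
      exact this.symm

lemma sa_inner {P : H →L[ℂ] H} (hP : IsSelfAdjoint P) (x y : H) : ⟪P x, y⟫ = ⟪x, P y⟫ :=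
  (ContinuousLinearMap.isSelfAdjoint_iff_isSymmetric.1 hP) x y

lemma proj_inner {P : H →L[ℂ] H} (h : IsProjOp P) (x : H) : ⟪P x, x⟫ = ⟪P x, P x⟫ := by
  have hs := (ContinuousLinearMap.isSelfAdjoint_iff_isSymmetric).1 h.2
  have : P x = P (P x) := by
    conv_lhs => rw [← h.1]
    rfl
  conv_lhs => rw [this]
  exact hs (P x) x

/-- From nonmaximality, extract two orthonormal vectors in the kernel of `p`. -/
lemma kernel_pair {p : H →L[ℂ] H} (hp : IsProjOp p) (hpm : NonmaxProj p) :
    ∃ e₁ e₂ : H, ‖e₁‖ = 1 ∧ ‖e₂‖ = 1 ∧ ⟪e₁, e₂⟫ = 0 ∧ p e₁ = 0 ∧ p e₂ = 0 := by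
  obtain ⟨Q, hQ, ⟨hQp_pos, hpQne⟩, ⟨h1Q_pos, hQ1ne⟩⟩ := hpm
  have hsp := (ContinuousLinearMap.isSelfAdjoint_iff_isSymmetric).1 hp.2
  have hsQ := (ContinuousLinearMap.isSelfAdjoint_iff_isSymmetric).1 hQ.2
  -- kernel inclusion
  have hker : ∀ x : H, Q x = 0 → p x = 0 := by
    intro x hx
    have h0 := hQp_pos.2 x
    rw [ContinuousLinearMap.reApplyInnerSelf_apply, ContinuousLinearMap.sub_apply, hx,
      zero_sub, inner_neg_left, map_neg, proj_inner hp] at h0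
    have h1 : RCLike.re ⟪p x, p x⟫ = 0 :=
      le_antisymm (by linarith) inner_self_nonneg
    rw [inner_self_eq_norm_sq] at h1
    have := pow_eq_zero_iff (n := 2) (by norm_num) |>.1 h1
    exact norm_eq_zero.1 this
  -- pQ = p
  have hpQ : ∀ y : H, p (Q y) = p y := by
    intro y
    have : Q (y - Q y) = 0 := by
      have := hQ.1
      rw [map_sub]
      rw [show Q (Q y) = (Q * Q) y from rfl, this, sub_self]
    have h2 := hker _ this
    rw [map_sub, sub_eq_zero] at h2
    exact h2.symm
  -- Qp = p
  have hQp : ∀ y : H, Q (p y) = p y := by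
    intro y
    apply ext_inner_left ℂ
    intro v
    rw [← sa_inner hQ.2 v (p y), ← sa_inner hp.2 (Q v) y, ← sa_inner hp.2 v y]
    congr 1
    exact hpQ v
  -- first vector : in ker Q ⊆ ker p
  have hx1 : ∃ x : H, Q x ≠ x := by
    by_contra hcon
    push_neg at hcon
    exact hQ1ne (by ext x; exact hcon x)
  obtain ⟨x, hx⟩ := hx1
  set u := x - Q x with hu
  have hu0 : u ≠ 0 := fun h => hx (by rw [sub_eq_zero] at h; exact h.symm)
  have hQu : Q u = 0 := by
    have := hQ.1
    rw [hu, map_sub, show Q (Q x) = (Q * Q) x from rfl, this, sub_self]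
  have hpu : p u = 0 := hker u hQu
  -- second vector : in ran Q ∩ ker p
  have hy1 : ∃ y : H, p y ≠ Q y := by
    by_contra hcon
    push_neg at hcon
    exact hpQne (by ext y; exact hcon y)
  obtain ⟨y, hy⟩ := hy1
  set v := Q y - p y with hv
  have hv0 : v ≠ 0 := fun h => hy (by rw [sub_eq_zero] at h; exact h.symm)
  have hpv : p v = 0 := by
    rw [hv, map_sub, hpQ y, show p (p y) = (p * p) y from rfl, hp.1, sub_self]
  have hQv : Q v = v := by
    rw [hv, map_sub, hQp y, show Q (Q y) = (Q * Q) y from rfl, hQ.1]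
  have huv : ⟪u, v⟫ = 0 := by
    rw [← hQv, ← sa_inner hQ.2 u v, hQu, inner_zero_left]
  -- normalize
  refine ⟨(‖u‖ : ℂ)⁻¹ • u, (‖v‖ : ℂ)⁻¹ • v, ?_, ?_, ?_, ?_, ?_⟩
  · rw [norm_smul]; simp [norm_ne_zero_iff.2 hu0]
  · rw [norm_smul]; simp [norm_ne_zero_iff.2 hv0]
  · rw [inner_smul_left, inner_smul_right, huv]; ring
  · rw [map_smul, hpu, smul_zero]
  · rw [map_smul, hpv, smul_zero]

lemma projSpan_mul_left {e : H} {P : H →L[ℂ] H} (h : P e = 0) : P * projSpan e = 0 := by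
  ext x
  simp [ContinuousLinearMap.mul_apply, projSpan_apply, map_smul, h]

lemma projSpan_mul_right {e : H} {P : H →L[ℂ] H} (hP : IsSelfAdjoint P) (h : P e = 0) :
    projSpan e * P = 0 := by
  have hs := (ContinuousLinearMap.isSelfAdjoint_iff_isSymmetric).1 hP
  ext x
  simp only [ContinuousLinearMap.mul_apply, projSpan_apply, ContinuousLinearMap.zero_apply]
  rw [← sa_inner hP e x, h, inner_zero_left, zero_smul]

lemma projSpan_mul_projSpan {e f : H} (h : ⟪e, f⟫ = 0) :
    projSpan e * projSpan f = 0 := by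
  ext x
  simp [ContinuousLinearMap.mul_apply, projSpan_apply, inner_smul_right, h]

theorem stmt17 (hdim : 3 ≤ Module.rank ℂ H) (p q : H →L[ℂ] H)
    (hp : IsProjOp p) (hq : IsProjOp q)
    (hpn : NontrivProj p) (hqn : NontrivProj q)
    (hpm : NonmaxProj p) (hqm : NonmaxProj q) :
    ∃ (n : ℕ) (c : Fin (n + 1) → (H →L[ℂ] H)),
      c 0 = p ∧ c (Fin.last n) = q ∧
      (∀ i, IsProjOp (c i) ∧ NontrivProj (c i) ∧ NonmaxProj (c i)) ∧
      ∀ i : Fin n, c i.castSucc * c i.succ = 0 ∧ ltOp (c i.castSucc + c i.succ) 1 := by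
  obtain ⟨e₁, e₂, he₁, he₂, he12, hpe₁, hpe₂⟩ := kernel_pair hp hpm
  obtain ⟨f₁, f₂, hf₁, hf₂, hf12, hqf₁, hqf₂⟩ := kernel_pair hq hqm
  obtain ⟨g, hg, heg, hfg⟩ := exists_orth_unit hdim e₁ f₁
  obtain ⟨z₁, hz₁0, hz₁e, hz₁g⟩ := exists_orth hdim e₁ g
  obtain ⟨z₂, hz₂0, hz₂g, hz₂f⟩ := exists_orth hdim g f₁
  have hge : ⟪g, e₁⟫ = 0 := by rw [← inner_conj_symm g e₁, heg, map_zero]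
  have hgf : ⟪g, f₁⟫ = 0 := by rw [← inner_conj_symm g f₁, hfg, map_zero]
  have he₂0 : e₂ ≠ 0 := fun h => by rw [h, norm_zero] at he₂; norm_num at he₂
  have hf₂0 : f₂ ≠ 0 := fun h => by rw [h, norm_zero] at hf₂; norm_num at hf₂
  refine ⟨4, ![p, projSpan e₁, projSpan g, projSpan f₁, q], rfl, rfl, ?_, ?_⟩
  · intro i
    fin_cases i
    · exact ⟨hp, hpn, hpm⟩
    · exact ⟨projSpan_isProj he₁, (projSpan_nontriv_nonmax hdim he₁).1,
        (projSpan_nontriv_nonmax hdim he₁).2⟩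
    · exact ⟨projSpan_isProj hg, (projSpan_nontriv_nonmax hdim hg).1,
        (projSpan_nontriv_nonmax hdim hg).2⟩
    · exact ⟨projSpan_isProj hf₁, (projSpan_nontriv_nonmax hdim hf₁).1,
        (projSpan_nontriv_nonmax hdim hf₁).2⟩
    · exact ⟨hq, hqn, hqm⟩
  · intro i
    fin_cases i
    · exact edge_lemma hp (projSpan_isProj he₁) (projSpan_mul_left hpe₁)
        (projSpan_mul_right hp.2 hpe₁) he₂0 hpe₂
        (by show projSpan e₁ e₂ = 0; rw [projSpan_apply, he12, zero_smul])
    · exact edge_lemma (projSpan_isProj he₁) (projSpan_isProj hg)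
        (projSpan_mul_projSpan heg) (projSpan_mul_projSpan hge) hz₁0
        (by show projSpan e₁ z₁ = 0; rw [projSpan_apply, hz₁e, zero_smul])
        (by show projSpan g z₁ = 0; rw [projSpan_apply, hz₁g, zero_smul])
    · exact edge_lemma (projSpan_isProj hg) (projSpan_isProj hf₁)
        (projSpan_mul_projSpan hgf) (projSpan_mul_projSpan hfg) hz₂0
        (by show projSpan g z₂ = 0; rw [projSpan_apply, hz₂g, zero_smul])
        (by show projSpan f₁ z₂ = 0; rw [projSpan_apply, hz₂f, zero_smul])
    · exact edge_lemma (projSpan_isProj hf₁) hq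
        (projSpan_mul_right hq.2 hqf₁) (projSpan_mul_left hqf₁) hf₂0
        (by show projSpan f₁ f₂ = 0; rw [projSpan_apply, hf12, zero_smul]) hqf₂
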